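/- Let E be a finite-dimensional real inner product space, F : E → ℝ differentiable, w ∈ E, and R : E × [0,∞) → ℝ a nonnegative function such that: (i) for each u, the map t ↦ R(u,t) is differentiable, nonincreasing, and tends to 0 as t → ∞; (ii) F(w) ≤ R(w,0); (iii) for each t, the map u ↦ R(u,t) is differentiable at w with gradient ∇_u R(w,t), the functions t ↦ R(w,t) and t ↦ ‖∇_u R(w,t)‖ are integrable on [0,∞), and the admissibility condition ∫₀^∞ ( ∂R(w,t)/∂t + ⟨∇_u R(w,t), ∇F(w)⟩ ) dt ≥ 0 holds; (iv) the function Φ(u) := ∫₀^∞ R(u,t) dt is differentiable at w with ∇Φ(w) = ∫₀^∞ ∇_u R(w,t) dt. Then ⟨∇Φ(w), ∇F(w)⟩ ≥ F(w). -/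

import Mathlib

open RealInnerProductSpace MeasureTheory

private lemma seq_tendsto_deriv {φ : ℝ → ℝ} {d x : ℝ} (h : HasDerivAt φ d x) :
    Filter.Tendsto (fun n : ℕ => (φ (x + ((n : ℝ) + 1)⁻¹) - φ x) / ((n : ℝ) + 1)⁻¹)
      Filter.atTop (nhds d) := by
  have hs := hasDerivAt_iff_tendsto_slope.1 h
  have hc : Filter.Tendsto (fun n : ℕ => x + ((n : ℝ) + 1)⁻¹) Filter.atTop
      (nhdsWithin x {x}ᶜ) := by
    apply tendsto_nhdsWithin_of_tendsto_nhds_of_eventually_within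
    · have h0 : Filter.Tendsto (fun n : ℕ => ((n : ℝ) + 1)⁻¹) Filter.atTop (nhds 0) := by
        simpa [one_div] using tendsto_one_div_add_atTop_nhds_zero_nat (𝕜 := ℝ)
      simpa using tendsto_const_nhds.add h0
    · filter_upwards with n
      have : ((n : ℝ) + 1)⁻¹ ≠ 0 := by positivity
      simp [this]
  have := hs.comp hc
  refine this.congr fun n => ?_
  have hne : ((n : ℝ) + 1)⁻¹ ≠ 0 := by positivity
  simp [Function.comp, slope_def_field, add_sub_cancel_left]

private lemma hasDerivAt_line {E : Type*} [NormedAddCommGroup E] [InnerProductSpace ℝ E]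
    [CompleteSpace E] {φ : E → ℝ} {a w : E} (v : E) (h : HasGradientAt φ a w) :
    HasDerivAt (fun s : ℝ => φ (w + s • v)) ⟪a, v⟫ 0 := by
  have hf := hasGradientAt_iff_hasFDerivAt.1 h
  have hline : HasDerivAt (fun s : ℝ => w + s • v) v 0 := by
    simpa using ((hasDerivAt_id (0 : ℝ)).smul_const v).const_add w
  have hf' : HasFDerivAt φ ((InnerProductSpace.toDual ℝ E) a : E →L[ℝ] ℝ)
      (w + (0 : ℝ) • v) := by simpa using hf
  have := hf'.comp_hasDerivAt 0 hline
  simp at this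
  exact this

theorem gradient_flow_to_potential
    {E : Type*} [NormedAddCommGroup E] [InnerProductSpace ℝ E] [FiniteDimensional ℝ E]
    (F : E → ℝ) (hF : Differentiable ℝ F) (w : E)
    (R : E → ℝ → ℝ) (R' : E → ℝ → ℝ) (G : ℝ → E)
    (hRnonneg : ∀ u : E, ∀ t : ℝ, 0 ≤ t → 0 ≤ R u t)
    (hRdiff : ∀ u : E, ∀ t : ℝ, 0 ≤ t → HasDerivAt (R u) (R' u t) t)
    (hRanti : ∀ u : E, AntitoneOn (R u) (Set.Ici 0))
    (hRlim : ∀ u : E, Filter.Tendsto (R u) Filter.atTop (nhds 0))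
    (hFw : F w ≤ R w 0)
    (hGrad : ∀ t : ℝ, 0 ≤ t → HasGradientAt (fun u => R u t) (G t) w)
    (hRint : IntegrableOn (fun t => R w t) (Set.Ici 0))
    (hGint : IntegrableOn (fun t => ‖G t‖) (Set.Ici 0))
    (hadm : 0 ≤ ∫ t in Set.Ici (0 : ℝ), (R' w t + ⟪G t, gradient F w⟫))
    (hΦgrad : HasGradientAt (fun u => ∫ t in Set.Ici (0 : ℝ), R u t)
      (∫ t in Set.Ici (0 : ℝ), G t) w) :
    F w ≤ ⟪gradient (fun u => ∫ t in Set.Ici (0 : ℝ), R u t) w, gradient F w⟫ := by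
  classical
  have hIci : MeasurableSet (Set.Ici (0 : ℝ)) := measurableSet_Ici
  set g : E := gradient F w with hgdef
  set c : ℕ → ℝ := fun n => ((n : ℝ) + 1)⁻¹ with hcdef
  have hcpos : ∀ n : ℕ, 0 < c n := fun n => by positivity
  -- continuity and measurability of R u on Ici 0
  have hContOn : ∀ u : E, ContinuousOn (R u) (Set.Ici 0) := fun u t ht =>
    (hRdiff u t ht).continuousAt.continuousWithinAt
  have hmeasR : ∀ u : E, AEStronglyMeasurable (R u) (volume.restrict (Set.Ici 0)) := fun u =>
    (hContOn u).aestronglyMeasurable hIci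
  have hContShift : ∀ cc : ℝ, 0 ≤ cc → ContinuousOn (fun t => R w (t + cc)) (Set.Ici 0) := by
    intro cc hcc t ht
    have ht' : (0 : ℝ) ≤ t := ht
    have h1 : ContinuousAt (R w) (t + cc) := (hRdiff w (t + cc) (by positivity)).continuousAt
    have h2 : ContinuousAt (fun s : ℝ => s + cc) t := (continuous_add_right cc).continuousAt
    have h3 : ContinuousAt ((R w) ∘ fun s : ℝ => s + cc) t := ContinuousAt.comp (x := t) h1 h2
    exact h3.continuousWithinAt
  -- shifted integrability and translation formula
  have hemb : ∀ cc : ℝ, MeasurableEmbedding (fun t : ℝ => t + cc) := fun cc =>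
    (MeasurableEquiv.addRight cc).measurableEmbedding
  have hpre : ∀ cc : ℝ, (fun t : ℝ => t + cc) ⁻¹' Set.Ici cc = Set.Ici 0 := by
    intro cc; ext x; simp [Set.mem_Ici]
  have hmap : ∀ cc : ℝ, Measure.map (fun t : ℝ => t + cc) (volume.restrict (Set.Ici 0))
      = volume.restrict (Set.Ici cc) := by
    intro cc
    rw [← hpre cc, ← Measure.restrict_map (measurable_add_const cc) measurableSet_Ici,
      (measurePreserving_add_right volume cc).map_eq]
  have hShiftInt : ∀ cc : ℝ, 0 ≤ cc → IntegrableOn (fun t => R w (t + cc)) (Set.Ici 0) := by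
    intro cc hcc
    have h1 : IntegrableOn (R w) (Set.Ici cc) := hRint.mono_set (Set.Ici_subset_Ici.2 hcc)
    have h2 : Integrable (R w)
        (Measure.map (fun t : ℝ => t + cc) (volume.restrict (Set.Ici 0))) := by
      rw [hmap cc]; exact h1
    exact (hemb cc).integrable_map_iff.1 h2
  have hShiftEq : ∀ cc : ℝ, 0 ≤ cc →
      ∫ t in Set.Ici (0 : ℝ), R w (t + cc) = ∫ t in Set.Ici cc, R w t := by
    intro cc hcc
    have := (measurePreserving_add_right volume cc).setIntegral_preimage_emb (hemb cc)
      (R w) (Set.Ici cc)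
    rw [hpre cc] at this
    exact this
  have hSplit : ∀ cc : ℝ, 0 ≤ cc →
      ∫ t in Set.Ici (0 : ℝ), R w t
        = (∫ t in Set.Ico (0 : ℝ) cc, R w t) + ∫ t in Set.Ici cc, R w t := by
    intro cc hcc
    rw [← setIntegral_union ((Set.Iio_disjoint_Ici le_rfl).mono_left Set.Ico_subset_Iio_self) measurableSet_Ici
      (hRint.mono_set Set.Ico_subset_Ici_self) (hRint.mono_set (Set.Ici_subset_Ici.2 hcc)),
      Set.Ico_union_Ici_eq_Ici hcc]
  have hIcoBound : ∀ cc : ℝ, 0 ≤ cc → ∫ t in Set.Ico (0 : ℝ) cc, R w t ≤ cc * R w 0 := by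
    intro cc hcc
    have h1 : ∫ t in Set.Ico (0 : ℝ) cc, R w t ≤ ∫ _t in Set.Ico (0 : ℝ) cc, R w 0 := by
      refine setIntegral_mono_on (hRint.mono_set Set.Ico_subset_Ici_self)
        (integrableOn_const (by simp [Real.volume_Ico])) measurableSet_Ico ?_
      intro t ht
      exact hRanti w Set.self_mem_Ici ht.1 ht.1
    calc ∫ t in Set.Ico (0 : ℝ) cc, R w t ≤ ∫ _t in Set.Ico (0 : ℝ) cc, R w 0 := h1
      _ = cc * R w 0 := by
        simp [Real.volume_Ico, ENNReal.toReal_ofReal hcc, hcc]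
  -- measurability of R' w
  have hmeasR' : AEStronglyMeasurable (R' w) (volume.restrict (Set.Ici 0)) := by
    apply aestronglyMeasurable_of_tendsto_ae Filter.atTop
      (f := fun (n : ℕ) (t : ℝ) => (R w (t + c n) - R w t) / c n)
    · intro n
      exact (((hContShift (c n) (hcpos n).le).sub (hContOn w)).div_const _).aestronglyMeasurable
        hIci
    · filter_upwards [ae_restrict_mem hIci] with t ht
      exact seq_tendsto_deriv (hRdiff w t ht)
  have hR'nonpos : ∀ t ∈ Set.Ici (0 : ℝ), R' w t ≤ 0 := by
    intro t ht
    have ht' : (0 : ℝ) ≤ t := ht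
    refine le_of_tendsto (seq_tendsto_deriv (hRdiff w t ht))
      (Filter.Eventually.of_forall fun n => ?_)
    apply div_nonpos_of_nonpos_of_nonneg
    · have := hRanti w ht (show t + c n ∈ Set.Ici (0:ℝ) by
        simp only [Set.mem_Ici]; positivity) (le_add_of_nonneg_right (hcpos n).le)
      linarith
    · exact (hcpos n).le
  -- integrability of R' w via Fatou
  have hQInt : ∀ n : ℕ, IntegrableOn (fun t => (R w t - R w (t + c n)) / c n) (Set.Ici 0) :=
    fun n => (hRint.sub (hShiftInt (c n) (hcpos n).le)).div_const _
  have hQnonneg : ∀ n : ℕ, ∀ t ∈ Set.Ici (0 : ℝ), 0 ≤ (R w t - R w (t + c n)) / c n := by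
    intro n t ht
    have ht' : (0 : ℝ) ≤ t := ht
    apply div_nonneg _ (hcpos n).le
    have := hRanti w ht (show t + c n ∈ Set.Ici (0:ℝ) by
      simp only [Set.mem_Ici]; positivity) (le_add_of_nonneg_right (hcpos n).le)
    linarith
  have hQBound : ∀ n : ℕ,
      ∫ t in Set.Ici (0 : ℝ), (R w t - R w (t + c n)) / c n ≤ R w 0 := by
    intro n
    have h1 : ∫ t in Set.Ici (0 : ℝ), (R w t - R w (t + c n)) / c n
        = ((∫ t in Set.Ici (0 : ℝ), R w t) - ∫ t in Set.Ici (0 : ℝ), R w (t + c n)) / c n := by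
      rw [integral_div, integral_sub hRint (hShiftInt (c n) (hcpos n).le)]
    rw [h1, hShiftEq (c n) (hcpos n).le, hSplit (c n) (hcpos n).le]
    rw [add_sub_cancel_right]
    rw [div_le_iff₀ (hcpos n)]
    calc ∫ t in Set.Ico (0 : ℝ) (c n), R w t ≤ c n * R w 0 := hIcoBound (c n) (hcpos n).le
      _ = R w 0 * c n := mul_comm _ _
  have hR'int : IntegrableOn (R' w) (Set.Ici 0) := by
    refine ⟨hmeasR', ?_⟩
    rw [hasFiniteIntegral_iff_norm]
    have hcongr : ∫⁻ t in Set.Ici (0 : ℝ), ENNReal.ofReal ‖R' w t‖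
        = ∫⁻ t in Set.Ici (0 : ℝ), ENNReal.ofReal (-(R' w t)) := by
      refine lintegral_congr_ae ?_
      filter_upwards [ae_restrict_mem hIci] with t ht
      rw [Real.norm_eq_abs, abs_of_nonpos (hR'nonpos t ht)]
    rw [hcongr]
    have key : ∫⁻ t in Set.Ici (0 : ℝ), ENNReal.ofReal (-(R' w t))
        ≤ ENNReal.ofReal (R w 0) := by
      have hptw : ∀ᵐ t ∂(volume.restrict (Set.Ici (0:ℝ))),
          ENNReal.ofReal (-(R' w t)) = Filter.liminf
            (fun n : ℕ => ENNReal.ofReal ((R w t - R w (t + c n)) / c n)) Filter.atTop := by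
        filter_upwards [ae_restrict_mem hIci] with t ht
        have htend : Filter.Tendsto
            (fun n : ℕ => ENNReal.ofReal ((R w t - R w (t + c n)) / c n)) Filter.atTop
            (nhds (ENNReal.ofReal (-(R' w t)))) := by
          apply (ENNReal.continuous_ofReal.tendsto _).comp
          have := (seq_tendsto_deriv (hRdiff w t ht)).neg
          refine this.congr fun n => ?_
          rw [← neg_div, neg_sub]
        exact htend.liminf_eq.symm
      calc ∫⁻ t in Set.Ici (0 : ℝ), ENNReal.ofReal (-(R' w t))
          = ∫⁻ t in Set.Ici (0 : ℝ), Filter.liminf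
            (fun n : ℕ => ENNReal.ofReal ((R w t - R w (t + c n)) / c n)) Filter.atTop :=
            lintegral_congr_ae hptw
        _ ≤ Filter.liminf (fun n : ℕ => ∫⁻ t in Set.Ici (0 : ℝ),
            ENNReal.ofReal ((R w t - R w (t + c n)) / c n)) Filter.atTop := by
            apply lintegral_liminf_le' fun n =>
              (ENNReal.measurable_ofReal.comp_aemeasurable (hQInt n).1.aemeasurable)
        _ ≤ ENNReal.ofReal (R w 0) := by
            refine Filter.liminf_le_of_frequently_le'
              (Filter.Frequently.of_forall fun n => ?_)
            rw [← ofReal_integral_eq_lintegral_ofReal (hQInt n)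
              ((ae_restrict_mem hIci).mono fun t ht => hQnonneg n t ht)]
            exact ENNReal.ofReal_le_ofReal (hQBound n)
    exact lt_of_le_of_lt key ENNReal.ofReal_lt_top
  -- value of the integral of R' w via FTC and the limit at infinity
  have hIntR' : ∫ t in Set.Ici (0 : ℝ), R' w t = -(R w 0) := by
    have hFTC : ∀ b : ℝ, 0 ≤ b → ∫ t in (0 : ℝ)..b, R' w t = R w b - R w 0 := by
      intro b hb
      apply intervalIntegral.integral_eq_sub_of_hasDerivAt
      · intro t ht
        rw [Set.uIcc_of_le hb] at ht
        exact hRdiff w t ht.1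
      · apply IntegrableOn.intervalIntegrable
        apply hR'int.mono_set
        rw [Set.uIcc_of_le hb]
        exact fun x hx => hx.1
    have hlim1 : Filter.Tendsto (fun b : ℝ => ∫ t in (0 : ℝ)..b, R' w t) Filter.atTop
        (nhds (∫ t in Set.Ici (0 : ℝ), R' w t)) := by
      rw [integral_Ici_eq_integral_Ioi]
      exact intervalIntegral_tendsto_integral_Ioi 0
        (hR'int.mono_set Set.Ioi_subset_Ici_self) Filter.tendsto_id
    have hlim2 : Filter.Tendsto (fun b : ℝ => ∫ t in (0 : ℝ)..b, R' w t) Filter.atTop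
        (nhds (0 - R w 0)) := by
      apply Filter.Tendsto.congr' _ ((hRlim w).sub_const (R w 0))
      filter_upwards [Filter.eventually_ge_atTop (0 : ℝ)] with b hb
      exact (hFTC b hb).symm
    have := tendsto_nhds_unique hlim1 hlim2
    rw [this]; ring
  -- measurability and integrability of G
  have hinnerMeas : ∀ v : E, AEStronglyMeasurable (fun t => (inner ℝ (G t) v : ℝ))
      (volume.restrict (Set.Ici 0)) := by
    intro v
    apply aestronglyMeasurable_of_tendsto_ae Filter.atTop
      (f := fun (n : ℕ) (t : ℝ) => (R (w + c n • v) t - R w t) / c n)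
    · intro n
      exact (((hContOn _).sub (hContOn w)).div_const _).aestronglyMeasurable hIci
    · filter_upwards [ae_restrict_mem hIci] with t ht
      have h1 : HasDerivAt (fun s : ℝ => R (w + s • v) t) ⟪G t, v⟫ 0 :=
        hasDerivAt_line v (hGrad t ht)
      have h2 := seq_tendsto_deriv h1
      simp only [zero_add, zero_smul, add_zero] at h2
      exact h2
  have hGmeas : AEStronglyMeasurable G (volume.restrict (Set.Ici 0)) := by
    have hb := stdOrthonormalBasis ℝ E
    have hGeq : G = fun t => ∑ i, (inner ℝ (G t) (hb i) : ℝ) • hb i := by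
      funext t
      conv_lhs => rw [← hb.sum_repr' (G t)]
      exact Finset.sum_congr rfl fun i _ => by rw [real_inner_comm]
    rw [hGeq]
    exact Finset.aestronglyMeasurable_fun_sum _ fun i _ =>
      (hinnerMeas (hb i)).smul (aestronglyMeasurable_const (b := hb i))
  have hGInt : IntegrableOn G (Set.Ici 0) :=
    hGint.mono' hGmeas (Filter.Eventually.of_forall fun t => le_rfl)
  have hinnerInt : IntegrableOn (fun t => (inner ℝ (G t) g : ℝ)) (Set.Ici 0) :=
    hGInt.inner_const g
  have hinnerEq : ∫ t in Set.Ici (0 : ℝ), (inner ℝ (G t) g : ℝ)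
      = ⟪∫ t in Set.Ici (0 : ℝ), G t, g⟫ := by
    rw [real_inner_comm, ← integral_inner hGInt g]
    exact integral_congr_ae (Filter.Eventually.of_forall fun t => real_inner_comm _ _)
  -- assemble
  have hsplit2 : ∫ t in Set.Ici (0 : ℝ), (R' w t + ⟪G t, g⟫)
      = (∫ t in Set.Ici (0 : ℝ), R' w t) + ∫ t in Set.Ici (0 : ℝ), (inner ℝ (G t) g : ℝ) :=
    integral_add hR'int hinnerInt
  rw [hsplit2, hIntR', hinnerEq] at hadm
  rw [hΦgrad.gradient]
  linarith
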